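/- Let X be a compact metric space and F : X → 2^X a set-valued mapping. In the space of F-invariant Borel probability measures on X (with the weak* topology), the subset of measures with full support (support equal to X) is either empty or a dense G_δ set. -/

import Mathlib

open MeasureTheory
open scoped NNReal ENNReal

/-- `μ` is `F`-invariant (Aubin–Frankowska–Lasota): `μ(B) ≤ μ(F⁻¹(B))` for Borel `B`,
where `F⁻¹(B) = {y : F(y) ∩ B ≠ ∅}`. -/
def SVInvariant {X : Type*} [MeasurableSpace X] (F : X → Set X) (μ : Measure X) : Prop :=
  ∀ B : Set X, MeasurableSet B → μ B ≤ μ {y : X | (F y ∩ B).Nonempty}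

open Filter Topology Set in
/-- For an open set `U`, the set of probability measures giving positive mass to `U` is open
in the weak topology. -/
lemma isOpen_pos_measure_aux {X : Type*} [MetricSpace X] [CompactSpace X] [MeasurableSpace X]
    [BorelSpace X] {U : Set X} (hU : IsOpen U) :
    IsOpen {μ : ProbabilityMeasure X | 0 < μ.toMeasure U} := by
  have hC : IsClosed Uᶜ := hU.isClosed_compl
  have δpos : ∀ n : ℕ, (0:ℝ) < ((n:ℝ)+1)⁻¹ := fun n => by positivity
  have key : {μ : ProbabilityMeasure X | 0 < μ.toMeasure U}
      = ⋃ n : ℕ, {μ : ProbabilityMeasure X |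
          μ.toFiniteMeasure.testAgainstNN (thickenedIndicator (δpos n) Uᶜ) < 1} := by
    ext μ
    simp only [Set.mem_setOf_eq, Set.mem_iUnion]
    have coe_eq : ∀ n : ℕ, (μ.toFiniteMeasure.testAgainstNN (thickenedIndicator (δpos n) Uᶜ)
        : ℝ≥0∞) = ∫⁻ x, (thickenedIndicator (δpos n) Uᶜ x : ℝ≥0∞) ∂μ.toMeasure :=
      fun n => FiniteMeasure.testAgainstNN_coe_eq
    constructor
    · intro hpos
      have hlt : μ.toMeasure Uᶜ < 1 := by
        rw [prob_compl_eq_one_sub hU.measurableSet]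
        exact ENNReal.sub_lt_self ENNReal.one_ne_top one_ne_zero hpos.ne'
      have htends : Tendsto (fun n : ℕ => μ.toMeasure (Metric.thickening (((n:ℝ)+1)⁻¹) Uᶜ))
          atTop (𝓝 (μ.toMeasure Uᶜ)) := by
        have h1 : Tendsto (fun δ : ℝ => μ.toMeasure (Metric.thickening δ Uᶜ)) (𝓝[>] 0)
            (𝓝 (μ.toMeasure Uᶜ)) :=
          tendsto_measure_thickening_of_isClosed
            ⟨1, one_pos, measure_ne_top _ _⟩ hC
        have h2 : Tendsto (fun n : ℕ => ((n:ℝ)+1)⁻¹) atTop (𝓝[>] (0:ℝ)) := by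
          apply tendsto_nhdsWithin_of_tendsto_nhds_of_eventually_within
          · exact tendsto_one_div_add_atTop_nhds_zero_nat.congr (by simp [one_div])
          · exact Eventually.of_forall fun n => δpos n
        exact h1.comp h2
      obtain ⟨n, hn⟩ := (htends.eventually_lt_const hlt).exists
      refine ⟨n, ?_⟩
      have hle : (∫⁻ x, (thickenedIndicator (δpos n) Uᶜ x : ℝ≥0∞) ∂μ.toMeasure)
          ≤ μ.toMeasure (Metric.thickening (((n:ℝ)+1)⁻¹) Uᶜ) := by
        calc (∫⁻ x, (thickenedIndicator (δpos n) Uᶜ x : ℝ≥0∞) ∂μ.toMeasure)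
            ≤ ∫⁻ x, (Metric.thickening (((n:ℝ)+1)⁻¹) Uᶜ).indicator 1 x ∂μ.toMeasure := by
              apply lintegral_mono
              intro x
              by_cases hx : x ∈ Metric.thickening (((n:ℝ)+1)⁻¹) Uᶜ
              · simp only [hx, Set.indicator_of_mem, Pi.one_apply]
                exact_mod_cast thickenedIndicator_le_one (δpos n) Uᶜ x
              · simp [thickenedIndicator_zero (δpos n) Uᶜ hx, hx]
          _ = μ.toMeasure (Metric.thickening (((n:ℝ)+1)⁻¹) Uᶜ) :=
              lintegral_indicator_one Metric.isOpen_thickening.measurableSet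
      have : (μ.toFiniteMeasure.testAgainstNN (thickenedIndicator (δpos n) Uᶜ) : ℝ≥0∞)
          < 1 := by
        rw [coe_eq n]; exact lt_of_le_of_lt hle hn
      exact_mod_cast this
    · rintro ⟨n, hn⟩
      have hge : μ.toMeasure Uᶜ
          ≤ (∫⁻ x, (thickenedIndicator (δpos n) Uᶜ x : ℝ≥0∞) ∂μ.toMeasure) := by
        rw [← lintegral_indicator_one hC.measurableSet]
        apply lintegral_mono
        intro x
        have h := indicator_le_thickenedIndicator (δpos n) Uᶜ x
        by_cases hx : x ∈ Uᶜ
        · simp only [hx, Set.indicator_of_mem, Pi.one_apply]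
          have : (1:ℝ≥0) ≤ thickenedIndicator (δpos n) Uᶜ x := by
            simpa [hx] using h
          exact_mod_cast this
        · simp [hx]
      have hn' : (μ.toFiniteMeasure.testAgainstNN (thickenedIndicator (δpos n) Uᶜ) : ℝ≥0∞)
          < 1 := by exact_mod_cast hn
      rw [coe_eq n] at hn'
      have hlt : μ.toMeasure Uᶜ < 1 := lt_of_le_of_lt hge hn'
      have : μ.toMeasure U = 1 - μ.toMeasure Uᶜ := by
        rw [← prob_compl_eq_one_sub hC.measurableSet, compl_compl]
      rw [this]
      exact tsub_pos_of_lt hlt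
  rw [key]
  apply isOpen_iUnion
  intro n
  exact (isOpen_Iio).preimage
    (ProbabilityMeasure.continuous_testAgainstNN_eval (thickenedIndicator (δpos n) Uᶜ))

open Filter Topology Set in
/-- within the space of `F`-invariant Borel probability measures (weak*
topology), the measures of full support form a set which is empty or a dense Gδ. -/
theorem full_support_invariant_measures_empty_or_dense_Gdelta
    {X : Type*} [MetricSpace X] [CompactSpace X] [MeasurableSpace X] [BorelSpace X]
    (F : X → Set X) (hvals : ∀ x, (F x).Nonempty ∧ IsClosed (F x)) :
    ({μ : {μ : ProbabilityMeasure X // SVInvariant F μ.toMeasure} |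
        ∀ U : Set X, IsOpen U → U.Nonempty → 0 < μ.1.toMeasure U} = ∅) ∨
    (Dense {μ : {μ : ProbabilityMeasure X // SVInvariant F μ.toMeasure} |
        ∀ U : Set X, IsOpen U → U.Nonempty → 0 < μ.1.toMeasure U} ∧
     IsGδ {μ : {μ : ProbabilityMeasure X // SVInvariant F μ.toMeasure} |
        ∀ U : Set X, IsOpen U → U.Nonempty → 0 < μ.1.toMeasure U}) := by
  set S := {μ : {μ : ProbabilityMeasure X // SVInvariant F μ.toMeasure} |
        ∀ U : Set X, IsOpen U → U.Nonempty → 0 < μ.1.toMeasure U} with hS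
  rcases S.eq_empty_or_nonempty with hemp | ⟨p, hp⟩
  · exact Or.inl hemp
  right
  constructor
  · -- Density
    rw [dense_iff_closure_eq]
    apply Set.eq_univ_of_forall
    intro ν
    -- coefficients
    set a : ℕ → ℝ≥0 := fun n => ((n : ℝ≥0) + 2)⁻¹ with ha
    have ha_pos : ∀ n, (0:ℝ≥0) < a n := fun n => by positivity
    have ha_le : ∀ n, a n ≤ 1 := by
      intro n
      have h2 : (1:ℝ≥0) ≤ (n : ℝ≥0) + 2 := le_trans one_le_two le_add_self
      exact inv_le_one_of_one_le₀ h2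
    have ha_tend : Filter.Tendsto a Filter.atTop (𝓝 0) := by
      rw [← NNReal.tendsto_coe]
      have : Filter.Tendsto (fun n : ℕ => ((n:ℝ) + 2)⁻¹) Filter.atTop (𝓝 0) :=
        tendsto_inv_atTop_zero.comp
          (Filter.tendsto_atTop_add_const_right Filter.atTop 2 tendsto_natCast_atTop_atTop)
      exact this.congr (by intro n; simp [ha])
    -- the measures
    set m : ℕ → Measure X := fun n =>
      ((1 - a n : ℝ≥0) : ℝ≥0∞) • ν.1.toMeasure + ((a n : ℝ≥0) : ℝ≥0∞) • p.1.toMeasure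
      with hm
    have hm_apply : ∀ n (s : Set X), m n s
        = ((1 - a n : ℝ≥0) : ℝ≥0∞) * ν.1.toMeasure s + ((a n : ℝ≥0) : ℝ≥0∞) * p.1.toMeasure s :=
      fun n s => by simp [hm, Measure.add_apply, Measure.smul_apply, smul_eq_mul]
    have hm_prob : ∀ n, IsProbabilityMeasure (m n) := by
      intro n
      constructor
      rw [hm_apply n Set.univ]
      simp only [measure_univ, mul_one]
      rw [← ENNReal.coe_add, tsub_add_cancel_of_le (ha_le n), ENNReal.coe_one]
    have hP_inv : ∀ n, SVInvariant F (m n) := by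
      intro n B hB
      rw [hm_apply, hm_apply]
      exact add_le_add (mul_le_mul_of_nonneg_left (ν.2 B hB) zero_le)
        (mul_le_mul_of_nonneg_left (p.2 B hB) zero_le)
    set Q : ℕ → {μ : ProbabilityMeasure X // SVInvariant F μ.toMeasure} :=
      fun n => ⟨⟨m n, hm_prob n⟩, hP_inv n⟩ with hQ
    have hQ_mem : ∀ n, Q n ∈ S := by
      intro n U hUo hUne
      have hpU : 0 < p.1.toMeasure U := hp U hUo hUne
      show 0 < m n U
      rw [hm_apply]
      have h1 : 0 < ((a n : ℝ≥0) : ℝ≥0∞) * p.1.toMeasure U :=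
        ENNReal.mul_pos (by exact_mod_cast (ha_pos n).ne') hpU.ne'
      exact lt_of_lt_of_le h1 le_add_self
    have key : Filter.Tendsto Q Filter.atTop (𝓝 ν) := by
      rw [tendsto_subtype_rng]
      rw [ProbabilityMeasure.tendsto_iff_forall_lintegral_tendsto]
      intro f
      have hfin : (∫⁻ x, (f x : ℝ≥0∞) ∂p.1.toMeasure) ≠ ⊤ :=
        (f.lintegral_lt_top_of_nnreal p.1.toMeasure).ne
      have hlin : ∀ n, (∫⁻ x, (f x : ℝ≥0∞) ∂((Q n).1 : Measure X))
          = ((1 - a n : ℝ≥0) : ℝ≥0∞) * (∫⁻ x, (f x : ℝ≥0∞) ∂ν.1.toMeasure)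
            + ((a n : ℝ≥0) : ℝ≥0∞) * (∫⁻ x, (f x : ℝ≥0∞) ∂p.1.toMeasure) := by
        intro n
        show (∫⁻ x, (f x : ℝ≥0∞) ∂(m n)) = _
        rw [hm, lintegral_add_measure, lintegral_smul_measure, lintegral_smul_measure,
          smul_eq_mul, smul_eq_mul]
      simp only [hlin]
      have lim1 : Filter.Tendsto (fun n => ((1 - a n : ℝ≥0) : ℝ≥0∞)) Filter.atTop
          (𝓝 (1 : ℝ≥0∞)) := by
        have h0 : Filter.Tendsto (fun n => (1 - a n : ℝ≥0)) Filter.atTop (𝓝 (1 - 0 : ℝ≥0)) :=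
          Filter.Tendsto.sub tendsto_const_nhds ha_tend
        have := ENNReal.tendsto_coe.mpr h0
        simpa using this
      have lim2 : Filter.Tendsto (fun n => ((a n : ℝ≥0) : ℝ≥0∞)) Filter.atTop
          (𝓝 (0 : ℝ≥0∞)) := by
        have := ENNReal.tendsto_coe.mpr ha_tend
        simpa using this
      have t1 := ENNReal.Tendsto.mul_const lim1
        (Or.inl (one_ne_zero)) (b := ∫⁻ x, (f x : ℝ≥0∞) ∂ν.1.toMeasure)
      have t2 := ENNReal.Tendsto.mul_const lim2 (Or.inr hfin)
        (b := ∫⁻ x, (f x : ℝ≥0∞) ∂p.1.toMeasure)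
      have := t1.add t2
      simpa using this
    exact mem_closure_of_tendsto key (Filter.Eventually.of_forall hQ_mem)
  · -- Gδ
    haveI : SecondCountableTopology X := inferInstance
    classical
    let Bas := {U ∈ TopologicalSpace.countableBasis X | U.Nonempty}
    have hBas_count : Bas.Countable :=
      (TopologicalSpace.countable_countableBasis X).mono (Set.sep_subset _ _)
    have hSeq : S = ⋂ U ∈ Bas,
        (Subtype.val ⁻¹' {μ : ProbabilityMeasure X | 0 < μ.toMeasure U}) := by
      ext μ
      simp only [hS, Set.mem_setOf_eq, Set.mem_iInter, Set.mem_preimage, Bas,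
        Set.mem_sep_iff]
      constructor
      · intro h U ⟨hUb, hUne⟩
        exact h U (TopologicalSpace.isOpen_of_mem_countableBasis hUb) hUne
      · intro h U hUo hUne
        obtain ⟨x, hx⟩ := hUne
        obtain ⟨V, hVb, hxV, hVU⟩ :=
          (TopologicalSpace.isBasis_countableBasis X).exists_subset_of_mem_open hx hUo
        exact lt_of_lt_of_le (h V ⟨hVb, ⟨x, hxV⟩⟩) (measure_mono hVU)
    rw [hSeq]
    apply IsGδ.biInter hBas_count
    intro U hU
    exact IsOpen.isGδ <| (isOpen_pos_measure_aux
      (TopologicalSpace.isOpen_of_mem_countableBasis hU.1)).preimage continuous_subtype_val
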